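/- Let a ∈ ℝ, c ≥ 0, T > 0, and let g : [0,T] → [0,∞) be continuous. Suppose u : [0,T] → ℝ is differentiable with u(0) = 0 and u'(t) = a u(t) + c u(t)² + g(t) for all t ∈ [0,T]. If U : [0,T] → [0,∞) is continuous and satisfies U(t) ≤ ∫_0^t e^{a(t−s)} ( c U(s)² + g(s) ) ds for all t ∈ [0,T], then U(t) ≤ u(t) for all t ∈ [0,T]. -/

import Mathlib

open Filter Set intervalIntegral

/-- Comparison principle used to bound the distance between the nonlinear
diffusion and its linearization: if `u' = a u + c u² + g`, `u(0) = 0`, and a nonnegative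
continuous `U` satisfies `U(t) ≤ ∫₀ᵗ e^{a(t−s)} (c U(s)² + g(s)) ds`, then `U ≤ u` on `[0,T]`. -/
theorem stmt14 (a c T : ℝ) (hc : 0 ≤ c) (hT : 0 < T)
    (g : ℝ → ℝ) (hg : ContinuousOn g (Icc 0 T)) (hg0 : ∀ t ∈ Icc (0:ℝ) T, 0 ≤ g t)
    (u : ℝ → ℝ) (hu0 : u 0 = 0)
    (hu : ∀ t ∈ Icc (0:ℝ) T, HasDerivAt u (a * u t + c * u t ^ 2 + g t) t)
    (U : ℝ → ℝ) (hUc : ContinuousOn U (Icc 0 T)) (hU0 : ∀ t ∈ Icc (0:ℝ) T, 0 ≤ U t)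
    (hUle : ∀ t ∈ Icc (0:ℝ) T,
      U t ≤ ∫ s in (0:ℝ)..t, Real.exp (a * (t - s)) * (c * U s ^ 2 + g s)) :
    ∀ t ∈ Icc (0:ℝ) T, U t ≤ u t := by
  -- continuity of u
  have huc : ContinuousOn u (Icc 0 T) := fun t ht =>
    (hu t ht).continuousAt.continuousWithinAt
  -- auxiliary function P = e^{-a t} u t
  set P : ℝ → ℝ := fun t => Real.exp (-a * t) * u t with hP
  have hPderiv : ∀ t ∈ Icc (0:ℝ) T,
      HasDerivAt P (Real.exp (-a * t) * (c * u t ^ 2 + g t)) t := by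
    intro t ht
    have h1 : HasDerivAt (fun t : ℝ => Real.exp (-a * t)) (Real.exp (-a * t) * (-a)) t := by
      simpa using ((hasDerivAt_id t).const_mul (-a)).exp
    have h2 := h1.mul (hu t ht)
    have h3 : HasDerivAt (fun t => Real.exp (-a * t) * u t)
        (Real.exp (-a * t) * (c * u t ^ 2 + g t)) t := by
      exact h2.congr_deriv (by ring)
    rw [hP]
    exact h3
  have hPcont : ContinuousOn P (Icc 0 T) :=
    ((Real.continuous_exp.comp (continuous_const.mul continuous_id)).continuousOn).mul huc
  -- nonnegativity of u on [0,T]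
  have hu_nonneg : ∀ t ∈ Icc (0:ℝ) T, 0 ≤ u t := by
    have hmono : MonotoneOn P (Icc 0 T) := by
      apply monotoneOn_of_deriv_nonneg (convex_Icc 0 T) hPcont
      · intro x hx
        rw [interior_Icc] at hx
        exact ((hPderiv x (Ioo_subset_Icc_self hx)).differentiableAt).differentiableWithinAt
      · intro x hx
        rw [interior_Icc] at hx
        rw [(hPderiv x (Ioo_subset_Icc_self hx)).deriv]
        have h1 := hg0 x (Ioo_subset_Icc_self hx)
        have h2 := sq_nonneg (u x)
        have h3 := (Real.exp_pos (-a * x)).le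
        exact mul_nonneg h3 (add_nonneg (mul_nonneg hc h2) h1)
    intro t ht
    have h0 : P 0 = 0 := by simp [hP, hu0]
    have hle := hmono (left_mem_Icc.2 hT.le) ht ht.1
    rw [h0] at hle
    have hexp : 0 < Real.exp (-a * t) := Real.exp_pos _
    simp only [hP] at hle
    by_contra h
    push_neg at h
    nlinarith [mul_pos hexp (neg_pos.2 h)]
  -- variation of constants: u t = ∫₀ᵗ e^{a(t-s)} (c u s² + g s) ds
  have hvoc : ∀ t ∈ Icc (0:ℝ) T,
      u t = ∫ s in (0:ℝ)..t, Real.exp (a * (t - s)) * (c * u s ^ 2 + g s) := by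
    intro t ht
    have hsub : Icc (0:ℝ) t ⊆ Icc 0 T := Icc_subset_Icc le_rfl ht.2
    have huIcc : uIcc (0:ℝ) t = Icc 0 t := uIcc_of_le ht.1
    have hint : IntervalIntegrable (fun s => Real.exp (-a * s) * (c * u s ^ 2 + g s))
        MeasureTheory.volume 0 t := by
      apply ContinuousOn.intervalIntegrable
      rw [huIcc]
      exact ((Real.continuous_exp.comp (continuous_const.mul continuous_id)).continuousOn).mul
        (((continuousOn_const.mul ((huc.mono hsub).pow 2))).add (hg.mono hsub))
    have hftc : (∫ s in (0:ℝ)..t, Real.exp (-a * s) * (c * u s ^ 2 + g s)) = P t - P 0 := by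
      apply intervalIntegral.integral_eq_sub_of_hasDerivAt
      · intro s hs
        rw [huIcc] at hs
        exact hPderiv s (hsub hs)
      · exact hint
    have h0 : P 0 = 0 := by simp [hP, hu0]
    rw [h0, sub_zero] at hftc
    have key : (∫ s in (0:ℝ)..t, Real.exp (a * (t - s)) * (c * u s ^ 2 + g s))
        = Real.exp (a * t) * ∫ s in (0:ℝ)..t, Real.exp (-a * s) * (c * u s ^ 2 + g s) := by
      rw [← intervalIntegral.integral_const_mul]
      apply intervalIntegral.integral_congr
      intro s _
      show Real.exp (a * (t - s)) * (c * u s ^ 2 + g s)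
          = Real.exp (a * t) * (Real.exp (-a * s) * (c * u s ^ 2 + g s))
      rw [← mul_assoc, ← Real.exp_add]
      ring_nf
    rw [key, hftc]
    simp only [hP]
    rw [← mul_assoc, ← Real.exp_add]
    simp
  -- bound K for the Gronwall argument
  obtain ⟨B, hB⟩ := (isCompact_Icc).exists_bound_of_continuousOn
    ((continuousOn_const.mul (hUc.add huc)) : ContinuousOn (fun s => c * (U s + u s)) (Icc 0 T))
  have hB0 : 0 ≤ B := le_trans (norm_nonneg _) (hB 0 (left_mem_Icc.2 hT.le))
  set E : ℝ := Real.exp (|a| * T) with hE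
  set K : ℝ := E * B with hK
  have hE0 : 0 < E := Real.exp_pos _
  have hK0 : 0 ≤ K := mul_nonneg hE0.le hB0
  -- the positive part of U - u
  set f : ℝ → ℝ := fun s => max (U s - u s) 0 with hf
  have hf0 : ∀ s, 0 ≤ f s := fun s => le_max_right _ _
  have hfc : ContinuousOn f (Icc 0 T) := ContinuousOn.sup (hUc.sub huc) continuousOn_const
  -- main integral inequality: U t - u t ≤ K * ∫₀ᵗ f
  have hmain : ∀ t ∈ Icc (0:ℝ) T, U t - u t ≤ K * ∫ s in (0:ℝ)..t, f s := by
    intro t ht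
    have hsub : Icc (0:ℝ) t ⊆ Icc 0 T := Icc_subset_Icc le_rfl ht.2
    have huIcc : uIcc (0:ℝ) t = Icc 0 t := uIcc_of_le ht.1
    have hintU : IntervalIntegrable (fun s => Real.exp (a * (t - s)) * (c * U s ^ 2 + g s))
        MeasureTheory.volume 0 t := by
      apply ContinuousOn.intervalIntegrable
      rw [huIcc]
      exact ((Real.continuous_exp.comp
        (continuous_const.mul (continuous_const.sub continuous_id))).continuousOn).mul
        ((continuousOn_const.mul ((hUc.mono hsub).pow 2)).add (hg.mono hsub))
    have hintu : IntervalIntegrable (fun s => Real.exp (a * (t - s)) * (c * u s ^ 2 + g s))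
        MeasureTheory.volume 0 t := by
      apply ContinuousOn.intervalIntegrable
      rw [huIcc]
      exact ((Real.continuous_exp.comp
        (continuous_const.mul (continuous_const.sub continuous_id))).continuousOn).mul
        ((continuousOn_const.mul ((huc.mono hsub).pow 2)).add (hg.mono hsub))
    have hintf : IntervalIntegrable f MeasureTheory.volume 0 t := by
      apply ContinuousOn.intervalIntegrable
      rw [huIcc]; exact hfc.mono hsub
    have hstep : U t - u t ≤ ∫ s in (0:ℝ)..t,
        (Real.exp (a * (t - s)) * (c * U s ^ 2 + g s)
          - Real.exp (a * (t - s)) * (c * u s ^ 2 + g s)) := by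
      rw [intervalIntegral.integral_sub hintU hintu]
      have h1 := hUle t ht
      have h2 := hvoc t ht
      linarith
    refine hstep.trans ?_
    rw [← intervalIntegral.integral_const_mul]
    apply intervalIntegral.integral_mono_on ht.1 (hintU.sub hintu) (hintf.const_mul K)
    intro s hs
    have hs' := hsub hs
    have hexp_le : Real.exp (a * (t - s)) ≤ E := by
      apply Real.exp_le_exp.2
      have h1 : a * (t - s) ≤ |a| * |t - s| := by
        calc a * (t - s) ≤ |a * (t - s)| := le_abs_self _
        _ = |a| * |t - s| := abs_mul _ _
      refine h1.trans ?_
      apply mul_le_mul_of_nonneg_left _ (abs_nonneg a)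
      rw [abs_of_nonneg (by linarith [hs.1, hs.2] : (0:ℝ) ≤ t - s)]
      linarith [hs.1, ht.2, hs.2]
    have hexp_pos : (0:ℝ) < Real.exp (a * (t - s)) := Real.exp_pos _
    have hBf : c * U s ^ 2 - c * u s ^ 2 ≤ B * f s := by
      have h1 : c * U s ^ 2 - c * u s ^ 2 = c * (U s + u s) * (U s - u s) := by ring
      rcases le_or_gt (U s - u s) 0 with h | h
      · have : c * (U s + u s) * (U s - u s) ≤ 0 :=
          mul_nonpos_of_nonneg_of_nonpos
            (mul_nonneg hc (add_nonneg (hU0 s hs') (hu_nonneg s hs'))) h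
        have : c * U s ^ 2 - c * u s ^ 2 ≤ 0 := by rw [h1]; exact this
        exact this.trans (mul_nonneg hB0 (hf0 s))
      · have hfs : f s = U s - u s := max_eq_left h.le
        rw [h1, hfs]
        apply mul_le_mul_of_nonneg_right _ h.le
        calc c * (U s + u s) ≤ |c * (U s + u s)| := le_abs_self _
        _ = ‖c * (U s + u s)‖ := (Real.norm_eq_abs _).symm
        _ ≤ B := hB s hs'
    calc Real.exp (a * (t - s)) * (c * U s ^ 2 + g s)
          - Real.exp (a * (t - s)) * (c * u s ^ 2 + g s)
        = Real.exp (a * (t - s)) * (c * U s ^ 2 - c * u s ^ 2) := by ring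
      _ ≤ Real.exp (a * (t - s)) * (B * f s) := by
          apply mul_le_mul_of_nonneg_left hBf hexp_pos.le
      _ ≤ E * (B * f s) :=
          mul_le_mul_of_nonneg_right hexp_le (mul_nonneg hB0 (hf0 s))
      _ = K * f s := by rw [hK]; ring
  -- hence f t ≤ K * F t where F t = ∫₀ᵗ f
  set F : ℝ → ℝ := fun t => ∫ s in (0:ℝ)..t, f s with hFdef
  have hF_nonneg : ∀ t ∈ Icc (0:ℝ) T, 0 ≤ F t := by
    intro t ht
    exact intervalIntegral.integral_nonneg ht.1 (fun s _ => hf0 s)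
  have hfF : ∀ t ∈ Icc (0:ℝ) T, f t ≤ K * F t := by
    intro t ht
    have h1 := hmain t ht
    have h2 : 0 ≤ K * F t := mul_nonneg hK0 (hF_nonneg t ht)
    exact max_le h1 h2
  -- integrability of f on [0,T]
  have hfint : MeasureTheory.IntegrableOn f (uIcc 0 T) MeasureTheory.volume := by
    rw [uIcc_of_le hT.le]
    exact hfc.integrableOn_compact isCompact_Icc
  have hFcont : ContinuousOn F (Icc 0 T) := by
    have := intervalIntegral.continuousOn_primitive_interval hfint
    rwa [uIcc_of_le hT.le] at this
  -- Gronwall: F ≡ 0 on [0,T]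
  have hFzero : ∀ t ∈ Icc (0:ℝ) T, F t = 0 := by
    set G : ℝ → ℝ := fun t => Real.exp (-K * t) * F t with hGdef
    have hGd : ∀ x ∈ Ioo (0:ℝ) T,
        HasDerivAt G (Real.exp (-K * x) * (f x - K * F x)) x := by
      intro x hx
      have hx' : x ∈ Icc (0:ℝ) T := Ioo_subset_Icc_self hx
      have hFd : HasDerivAt F (f x) x := by
        apply intervalIntegral.integral_hasDerivAt_right
        · apply ContinuousOn.intervalIntegrable
          rw [uIcc_of_le hx'.1]
          exact hfc.mono (Icc_subset_Icc le_rfl hx'.2)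
        · exact (ContinuousOn.stronglyMeasurableAtFilter isOpen_Ioo
            (hfc.mono Ioo_subset_Icc_self)) x hx
        · exact (hfc.mono Ioo_subset_Icc_self).continuousAt (Ioo_mem_nhds hx.1 hx.2)
      have hEd : HasDerivAt (fun t : ℝ => Real.exp (-K * t)) (Real.exp (-K * x) * (-K)) x := by
        simpa using ((hasDerivAt_id x).const_mul (-K)).exp
      have h2 := hEd.mul hFd
      have h3 : HasDerivAt (fun t => Real.exp (-K * t) * F t)
          (Real.exp (-K * x) * (f x - K * F x)) x := by
        exact h2.congr_deriv (by ring)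
      rw [hGdef]
      exact h3
    have hGcont : ContinuousOn G (Icc 0 T) :=
      ((Real.continuous_exp.comp (continuous_const.mul continuous_id)).continuousOn).mul hFcont
    have hGanti : AntitoneOn G (Icc 0 T) := by
      apply antitoneOn_of_deriv_nonpos (convex_Icc 0 T) hGcont
      · intro x hx
        rw [interior_Icc] at hx
        exact ((hGd x hx).differentiableAt).differentiableWithinAt
      · intro x hx
        rw [interior_Icc] at hx
        rw [(hGd x hx).deriv]
        have h1 := hfF x (Ioo_subset_Icc_self hx)
        have h2 := (Real.exp_pos (-K * x)).le
        nlinarith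
    intro t ht
    have hG0 : G 0 = 0 := by simp [hGdef, hFdef]
    have hle := hGanti (left_mem_Icc.2 hT.le) ht ht.1
    rw [hG0] at hle
    have hexp : 0 < Real.exp (-K * t) := Real.exp_pos _
    have hle' : Real.exp (-K * t) * F t ≤ 0 := hle
    rcases (hF_nonneg t ht).eq_or_lt with h | h
    · exact h.symm
    · exfalso
      nlinarith [mul_pos hexp h]
  intro t ht
  have := hmain t ht
  rw [show (∫ s in (0:ℝ)..t, f s) = F t from rfl, hFzero t ht] at this
  linarith
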